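/- Let m be a positive integer, C ≤ F₂^{24m} a self-dual doubly-even binary code, and σ = (1,2)(3,4)⋯(24m−1,24m) a fixed point free involution of the coordinates with σ(C) = C. Let P = π(C(σ)) = {(c₁,…,c_{12m}) ∈ F₂^{12m} : (c₁,c₁,…,c_{12m},c_{12m}) ∈ C}. If P is not self-dual (P ≠ P⊥), then there exists a semi self-dual code D ≤ F₂^{12m} with P⊥ ⊆ D ⊆ D⊥ ⊆ P. -/

import Mathlib

/-- The fixed point free involution `(1,2)(3,4)⋯(24m-1,24m)` of the `24m`
coordinates (0-indexed: it swaps `2k` and `2k+1`). -/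
def pairSwap24 (m : ℕ) : Equiv.Perm (Fin (24 * m)) where
  toFun i := ⟨2 * (i.val / 2) + (1 - i.val % 2), by have := i.isLt; omega⟩
  invFun i := ⟨2 * (i.val / 2) + (1 - i.val % 2), by have := i.isLt; omega⟩
  left_inv i := by
    apply Fin.ext
    simp only []
    omega
  right_inv i := by
    apply Fin.ext
    simp only []
    omega

/-- The linear map sending `(c₁, …, c_{12m})` to
`(c₁, c₁, c₂, c₂, …, c_{12m}, c_{12m})`. -/
def doubleMap24 (m : ℕ) : (Fin (12 * m) → ZMod 2) →ₗ[ZMod 2] (Fin (24 * m) → ZMod 2) where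
  toFun c := fun i => c ⟨i.val / 2, by have := i.isLt; omega⟩
  map_add' := fun _ _ => rfl
  map_smul' := fun _ _ => rfl

/-- The Hamming weight of a word in `(ZMod 2)^n`. -/
def wt {n : ℕ} (c : Fin n → ZMod 2) : ℕ :=
  (Finset.univ.filter fun i => c i ≠ 0).card

/-- The dual code of a binary linear code. -/
def dualCode {n : ℕ} (D : Submodule (ZMod 2) (Fin n → ZMod 2)) :
    Submodule (ZMod 2) (Fin n → ZMod 2) where
  carrier := {v | ∀ c ∈ D, ∑ i, v i * c i = 0}
  zero_mem' := by intro c hc; simp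
  add_mem' := by
    intro a b ha hb c hc
    simp [add_mul, Finset.sum_add_distrib, ha c hc, hb c hc]
  smul_mem' := by
    intro r a ha c hc
    simp [mul_assoc, ← Finset.mul_sum, ha c hc]

/-- A semi self-dual code: self-orthogonal, contains the all-ones vector,
and has codimension 2 in its dual. -/
def IsSemiSelfDual {n : ℕ} (D : Submodule (ZMod 2) (Fin n → ZMod 2)) : Prop :=
  D ≤ dualCode D ∧ (fun _ => 1 : Fin n → ZMod 2) ∈ D ∧
    Module.finrank (ZMod 2) (dualCode D) = Module.finrank (ZMod 2) D + 2

/-- The minimum distance: minimum weight of a nonzero codeword. -/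
noncomputable def minDist {n : ℕ} (C : Submodule (ZMod 2) (Fin n → ZMod 2)) : ℕ :=
  sInf {k | ∃ c ∈ C, c ≠ 0 ∧ wt c = k}

/-- Doubly-even codes. -/
def IsDoublyEven {n : ℕ} (D : Submodule (ZMod 2) (Fin n → ZMod 2)) : Prop :=
  ∀ c ∈ D, wt c % 4 = 0


open Module

section DotForm
variable (n : ℕ)

def dotForm : LinearMap.BilinForm (ZMod 2) (Fin n → ZMod 2) :=
  LinearMap.mk₂ (ZMod 2) (fun v w => ∑ i, v i * w i)
    (by intros; simp [add_mul, Finset.sum_add_distrib])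
    (by intros; simp [Finset.mul_sum, mul_assoc])
    (by intros; simp [mul_add, Finset.sum_add_distrib])
    (by intros; simp [Finset.mul_sum]; exact Finset.sum_congr rfl fun i _ => by ring)

@[simp] lemma dotForm_apply (v w : Fin n → ZMod 2) : dotForm n v w = ∑ i, v i * w i := rfl

lemma dotForm_comm (v w : Fin n → ZMod 2) : dotForm n v w = dotForm n w v := by
  simp [mul_comm]

lemma dotForm_refl : (dotForm n).IsRefl := by
  intro v w h
  rwa [dotForm_comm]

lemma dotForm_nondeg : (dotForm n).Nondegenerate := by
  refine (LinearMap.IsRefl.nondegenerate_iff_separatingLeft (dotForm_refl n)).mpr ?_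
  intro v hv
  funext i
  have := hv (Pi.single i 1)
  simpa [Pi.single_apply, mul_ite, Finset.sum_ite_eq'] using this

lemma dualCode_eq_orthogonal {n : ℕ} (D : Submodule (ZMod 2) (Fin n → ZMod 2)) :
    dualCode D = (dotForm n).orthogonal D := by
  ext v
  constructor
  · intro hv c hc
    have := hv c hc
    simpa [LinearMap.BilinForm.IsOrtho, mul_comm] using this
  · intro hv c hc
    have := hv c hc
    simpa [LinearMap.BilinForm.IsOrtho, mul_comm] using this

lemma finrank_dualCode {n : ℕ} (D : Submodule (ZMod 2) (Fin n → ZMod 2)) :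
    finrank (ZMod 2) (dualCode D) = n - finrank (ZMod 2) D := by
  rw [dualCode_eq_orthogonal,
    LinearMap.BilinForm.finrank_orthogonal (dotForm_nondeg n)]
  simp [Module.finrank_pi]

lemma dualCode_dualCode {n : ℕ} (D : Submodule (ZMod 2) (Fin n → ZMod 2)) :
    dualCode (dualCode D) = D := by
  rw [dualCode_eq_orthogonal, dualCode_eq_orthogonal,
    LinearMap.BilinForm.orthogonal_orthogonal (dotForm_nondeg n) (dotForm_refl n)]

lemma dualCode_antitone {n : ℕ} {D E : Submodule (ZMod 2) (Fin n → ZMod 2)} (h : D ≤ E) :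
    dualCode E ≤ dualCode D := fun v hv c hc => hv c (h hc)

lemma finrank_le_n {n : ℕ} (D : Submodule (ZMod 2) (Fin n → ZMod 2)) :
    finrank (ZMod 2) D ≤ n := by
  have := Submodule.finrank_le D
  simpa [Module.finrank_pi] using this

end DotForm

lemma sum_eq_wt {n : ℕ} (c : Fin n → ZMod 2) : ∑ i, c i = (wt c : ZMod 2) := by
  rw [wt, ← Finset.sum_filter_ne_zero]
  have h1 : ∀ a : ZMod 2, a ≠ 0 → a = 1 := by decide
  rw [Finset.sum_congr rfl (fun i hi => h1 _ (Finset.mem_filter.mp hi).2)]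
  simp [mul_comm]

lemma sum_eq_zero_of_even {n : ℕ} (c : Fin n → ZMod 2) (h : wt c % 2 = 0) :
    ∑ i, c i = 0 := by
  rw [sum_eq_wt, (ZMod.natCast_eq_zero_iff _ 2).mpr (Nat.dvd_of_mod_eq_zero h)]

lemma self_dot_eq_zero {n : ℕ} (c : Fin n → ZMod 2) (h : wt c % 2 = 0) :
    ∑ i, c i * c i = 0 := by
  have h2 : ∀ a : ZMod 2, a * a = a := by decide
  simpa [h2] using sum_eq_zero_of_even c h

def pairEquiv (m : ℕ) : Fin (12 * m) × Fin 2 ≃ Fin (24 * m) where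
  toFun p := ⟨2 * p.1.val + p.2.val, by have := p.1.isLt; have := p.2.isLt; omega⟩
  invFun i := (⟨i.val / 2, by have := i.isLt; omega⟩, ⟨i.val % 2, by omega⟩)
  left_inv p := by
    have := p.2.isLt
    ext
    · simp only []; omega
    · simp only []; omega
  right_inv i := by
    apply Fin.ext
    simp only []
    omega

lemma pair_sum {M : Type*} [AddCommMonoid M] {m : ℕ} (f : Fin (24 * m) → M) :
    ∑ i, f i = ∑ k : Fin (12 * m),
      (f ⟨2 * k.val, by have := k.isLt; omega⟩ + f ⟨2 * k.val + 1, by have := k.isLt; omega⟩) := by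
  rw [← Equiv.sum_comp (pairEquiv m) f, Fintype.sum_prod_type]
  refine Finset.sum_congr rfl fun k _ => ?_
  rw [Fin.sum_univ_two]
  rfl

lemma doubleMap_apply {m : ℕ} (c : Fin (12 * m) → ZMod 2) (i : Fin (24 * m)) :
    doubleMap24 m c i = c ⟨i.val / 2, by have := i.isLt; omega⟩ := rfl

lemma doubleMap_pair {m : ℕ} (c : Fin (12 * m) → ZMod 2) (k : Fin (12 * m)) :
    doubleMap24 m c ⟨2 * k.val, by have := k.isLt; omega⟩ = c k ∧
    doubleMap24 m c ⟨2 * k.val + 1, by have := k.isLt; omega⟩ = c k := by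
  constructor <;> · rw [doubleMap_apply]; congr 1; apply Fin.ext; simp only []; omega

lemma wt_doubleMap {m : ℕ} (c : Fin (12 * m) → ZMod 2) :
    wt (doubleMap24 m c) = 2 * wt c := by
  rw [wt, wt, Finset.card_filter, Finset.card_filter, pair_sum]
  rw [Finset.mul_sum]
  refine Finset.sum_congr rfl fun k _ => ?_
  rw [(doubleMap_pair c k).1, (doubleMap_pair c k).2]
  by_cases h : c k ≠ 0 <;> simp [h]

lemma mem_dualCode_iff {n : ℕ} {D : Submodule (ZMod 2) (Fin n → ZMod 2)}
    {v : Fin n → ZMod 2} : v ∈ dualCode D ↔ ∀ c ∈ D, ∑ i, v i * c i = 0 := Iff.rfl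

lemma extend_selfOrth {n r : ℕ} (P : Submodule (ZMod 2) (Fin n → ZMod 2))
    (heven : ∀ c ∈ P, wt c % 2 = 0) (hr : 2 * r < n) :
    ∀ (k : ℕ) (D : Submodule (ZMod 2) (Fin n → ZMod 2)), dualCode P ≤ D → D ≤ dualCode D →
      finrank (ZMod 2) D + k = r →
      ∃ D', dualCode P ≤ D' ∧ D' ≤ dualCode D' ∧ finrank (ZMod 2) D' = r := by
  intro k
  induction k with
  | zero => intro D h1 h2 h3; exact ⟨D, h1, h2, by omega⟩
  | succ k ih =>
    intro D h1 h2 h3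
    have hDP : dualCode D ≤ P := by
      have := dualCode_antitone h1
      rwa [dualCode_dualCode] at this
    have hfd : finrank (ZMod 2) (dualCode D) = n - finrank (ZMod 2) D := finrank_dualCode D
    have hfn : finrank (ZMod 2) D ≤ n := finrank_le_n D
    have hlt : D < dualCode D := by
      rcases lt_or_eq_of_le h2 with h | h
      · exact h
      · exfalso; rw [← h] at hfd; omega
    obtain ⟨x, hxD', hxD⟩ := SetLike.exists_of_lt hlt
    have hxx : ∑ i, x i * x i = 0 := self_dot_eq_zero x (heven x (hDP hxD'))
    have hxne : x ≠ 0 := fun h => hxD (h ▸ D.zero_mem)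
    have hxmem : x ∈ D ⊔ Submodule.span (ZMod 2) {x} :=
      Submodule.mem_sup_right (Submodule.mem_span_singleton_self x)
    refine ih (D ⊔ Submodule.span (ZMod 2) {x}) (le_trans h1 le_sup_left) ?_ ?_
    · -- self-orthogonality
      intro a ha
      rw [mem_dualCode_iff]
      intro b hb
      obtain ⟨da, hda, ea, hea, rfl⟩ := Submodule.mem_sup.mp ha
      obtain ⟨db, hdb, eb, heb, rfl⟩ := Submodule.mem_sup.mp hb
      obtain ⟨ra, rfl⟩ := Submodule.mem_span_singleton.mp hea
      obtain ⟨rb, rfl⟩ := Submodule.mem_span_singleton.mp heb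
      have expand : ∀ i, (da + ra • x) i * ((db + rb • x) i) =
          da i * db i + ra * (x i * db i) + rb * (da i * x i) + ra * rb * (x i * x i) := by
        intro i
        simp only [Pi.add_apply, Pi.smul_apply, smul_eq_mul]
        ring
      rw [Finset.sum_congr rfl fun i _ => expand i]
      have z1 : ∑ i, da i * db i = 0 := h2 hda db hdb
      have z2 : ∑ i, x i * db i = 0 := hxD' db hdb
      have z3 : ∑ i, da i * x i = 0 := by
        have h := hxD' da hda
        rw [Finset.sum_congr rfl fun i _ => mul_comm (da i) (x i)]
        exact h
      simp [Finset.sum_add_distrib, ← Finset.mul_sum, z1, z2, z3, hxx]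
    · -- rank
      have hlt' : D < D ⊔ Submodule.span (ZMod 2) {x} :=
        lt_of_le_of_ne le_sup_left (fun h => hxD (h ▸ hxmem))
      have r1 : finrank (ZMod 2) D < finrank (ZMod 2) ↥(D ⊔ Submodule.span (ZMod 2) {x}) :=
        Submodule.finrank_lt_finrank_of_lt hlt'
      have r2 := Submodule.finrank_sup_add_finrank_inf_eq D (Submodule.span (ZMod 2) {x})
      have r3 : finrank (ZMod 2) ↥(Submodule.span (ZMod 2) {x}) = 1 :=
        finrank_span_singleton hxne
      omega

/-- Let `C` be a self-dual doubly-even code of length `24m` invariant under the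
fixed point free involution `σ = (1,2)(3,4)⋯(24m-1,24m)` and let
`P = π(C(σ))`. If `P` is not self-dual, then there is a semi self-dual code `D`
with `P⊥ ⊆ D ⊆ D⊥ ⊆ P`. -/
theorem exists_semi_self_dual_between_proj
    {m : ℕ} (hm : 0 < m) (C : Submodule (ZMod 2) (Fin (24 * m) → ZMod 2))
    (hC : C = dualCode C) (hde : IsDoublyEven C)
    (hσC : ∀ c : Fin (24 * m) → ZMod 2,
      c ∈ C ↔ (fun i => c ((pairSwap24 m)⁻¹ i)) ∈ C)
    (hP : Submodule.comap (doubleMap24 m) C ≠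
      dualCode (Submodule.comap (doubleMap24 m) C)) :
    ∃ D : Submodule (ZMod 2) (Fin (12 * m) → ZMod 2), IsSemiSelfDual D ∧
      dualCode (Submodule.comap (doubleMap24 m) C) ≤ D ∧
      D ≤ dualCode D ∧
      dualCode D ≤ Submodule.comap (doubleMap24 m) C := by
    set P := Submodule.comap (doubleMap24 m) C with hPdef
    -- evenness of weights in P
    have heven : ∀ c ∈ P, wt c % 2 = 0 := by
      intro c hc
      have h4 := hde (doubleMap24 m c) hc
      rw [wt_doubleMap] at h4
      omega
    -- P⊥ ≤ P
    have hPsub : dualCode P ≤ P := by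
      intro u hu
      rw [Submodule.mem_comap, hC, mem_dualCode_iff]
      intro c hc
      set y : Fin (12 * m) → ZMod 2 := fun k =>
        c ⟨2 * k.val, by have := k.isLt; omega⟩ + c ⟨2 * k.val + 1, by have := k.isLt; omega⟩
        with hy
      have hyP : y ∈ P := by
        rw [Submodule.mem_comap]
        have hEq : doubleMap24 m y = c + (fun i => c ((pairSwap24 m)⁻¹ i)) := by
          funext i
          have hlt := i.isLt
          show c ⟨2 * (i.val / 2), by omega⟩ + c ⟨2 * (i.val / 2) + 1, by omega⟩
            = c i + c ⟨2 * (i.val / 2) + (1 - i.val % 2), by omega⟩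
          rcases Nat.mod_two_eq_zero_or_one i.val with h | h
          · rw [show (⟨2 * (i.val / 2), by omega⟩ : Fin (24 * m)) = i from Fin.ext (by simp only [Fin.val_mk]; omega),
              show (⟨2 * (i.val / 2) + 1, by omega⟩ : Fin (24 * m))
                = ⟨2 * (i.val / 2) + (1 - i.val % 2), by omega⟩ from Fin.ext (by simp only [Fin.val_mk]; omega)]
          · rw [show (⟨2 * (i.val / 2) + 1, by omega⟩ : Fin (24 * m)) = i from
                Fin.ext (by simp only [Fin.val_mk]; omega),
              show (⟨2 * (i.val / 2), by omega⟩ : Fin (24 * m))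
                = ⟨2 * (i.val / 2) + (1 - i.val % 2), by omega⟩ from Fin.ext (by simp only [Fin.val_mk]; omega),
              add_comm]
        rw [hEq]
        exact C.add_mem hc ((hσC c).mp hc)
      have hsum : ∑ i, doubleMap24 m u i * c i = ∑ k, u k * y k := by
        rw [pair_sum (fun i => doubleMap24 m u i * c i)]
        refine Finset.sum_congr rfl fun k _ => ?_
        rw [(doubleMap_pair u k).1, (doubleMap_pair u k).2, hy]
        ring
      rw [hsum]
      exact hu y hyP
    -- all-ones vector
    have hone : (fun _ => 1 : Fin (12 * m) → ZMod 2) ∈ dualCode P := by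
      rw [mem_dualCode_iff]
      intro c hc
      simpa using sum_eq_zero_of_even c (heven c hc)
    -- ranks
    have hfd : finrank (ZMod 2) (dualCode P) = 12 * m - finrank (ZMod 2) P :=
      finrank_dualCode P
    have hfn : finrank (ZMod 2) P ≤ 12 * m := finrank_le_n P
    have hlt : dualCode P < P := lt_of_le_of_ne hPsub (fun h => hP h.symm)
    have hrk : finrank (ZMod 2) (dualCode P) < finrank (ZMod 2) P :=
      Submodule.finrank_lt_finrank_of_lt hlt
    have hle : finrank (ZMod 2) (dualCode P) ≤ 6 * m - 1 := by omega
    obtain ⟨D, hD1, hD2, hD3⟩ := extend_selfOrth P heven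
      (show 2 * (6 * m - 1) < 12 * m by omega)
      (6 * m - 1 - finrank (ZMod 2) (dualCode P)) (dualCode P) le_rfl
      (by rw [dualCode_dualCode]; exact hPsub) (by omega)
    have hDP : dualCode D ≤ P := by
      have := dualCode_antitone hD1
      rwa [dualCode_dualCode] at this
    refine ⟨D, ⟨hD2, hD1 hone, ?_⟩, hD1, hD2, hDP⟩
    rw [finrank_dualCode D, hD3]
    omega
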